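/- arXiv:2007.09575 — 4 statements merged into one kernel-verified Lean document; each statement's English description precedes it below -/
import Mathlib

section
/- Let A, B, C ∈ ℝ with C > 0, set s = √(C/2), let f : ℝ → ℝ be twice differentiable, and define g(x) = e^{s·cos 2x}·f(x). Then f''(x) + (A + B·cos 2x + C·cos 4x)·f(x) = 0 for all x ∈ ℝ if and only if g''(x) + 4s·sin 2x·g'(x) + ((A + C) + (B + 4s)·cos 2x)·g(x) = 0 for all x ∈ ℝ. -/
open Real

theorem stmt11 (A B C : ℝ) (hC : 0 < C) (s : ℝ) (hs : s = Real.sqrt (C / 2))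
    (f : ℝ → ℝ) (hf : Differentiable ℝ f) (hf' : Differentiable ℝ (deriv f))
    (g : ℝ → ℝ) (hg : ∀ x, g x = Real.exp (s * Real.cos (2 * x)) * f x) :
    (∀ x : ℝ,
      deriv (deriv f) x + (A + B * Real.cos (2 * x) + C * Real.cos (4 * x)) * f x = 0) ↔
    (∀ x : ℝ,
      deriv (deriv g) x + 4 * s * Real.sin (2 * x) * deriv g x +
        ((A + C) + (B + 4 * s) * Real.cos (2 * x)) * g x = 0) := by
  have hs2 : s * s = C / 2 := by
    rw [hs]; exact Real.mul_self_sqrt (by linarith)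
  have hgf : g = fun x => Real.exp (s * Real.cos (2 * x)) * f x := funext hg
  have h2x : ∀ x : ℝ, HasDerivAt (fun x : ℝ => 2 * x) 2 x := fun x => by
    simpa using (hasDerivAt_id x).const_mul 2
  have hu : ∀ x : ℝ, HasDerivAt (fun x => Real.exp (s * Real.cos (2 * x)))
      (Real.exp (s * Real.cos (2 * x)) * (s * (-Real.sin (2 * x) * 2))) x := fun x =>
    (((Real.hasDerivAt_cos (2 * x)).comp x (h2x x)).const_mul s).exp
  have hg1 : ∀ x, HasDerivAt g
      (Real.exp (s * Real.cos (2 * x)) * (s * (-Real.sin (2 * x) * 2)) * f x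
        + Real.exp (s * Real.cos (2 * x)) * deriv f x) x := fun x => by
    rw [hgf]; exact (hu x).mul (hf x).hasDerivAt
  have hg1' : deriv g = fun x => Real.exp (s * Real.cos (2 * x)) * (s * (-Real.sin (2 * x) * 2)) * f x
      + Real.exp (s * Real.cos (2 * x)) * deriv f x := funext fun x => (hg1 x).deriv
  have hsin : ∀ x : ℝ, HasDerivAt (fun x => s * (-Real.sin (2 * x) * 2))
      (s * (-(Real.cos (2 * x) * 2) * 2)) x := fun x =>
    ((((Real.hasDerivAt_sin (2 * x)).comp x (h2x x)).neg).mul_const 2).const_mul s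
  have hg2 : ∀ x, deriv (deriv g) x =
      (Real.exp (s * Real.cos (2 * x)) * (s * (-Real.sin (2 * x) * 2)) * (s * (-Real.sin (2 * x) * 2))
        + Real.exp (s * Real.cos (2 * x)) * (s * (-(Real.cos (2 * x) * 2) * 2))) * f x
      + Real.exp (s * Real.cos (2 * x)) * (s * (-Real.sin (2 * x) * 2)) * deriv f x
      + (Real.exp (s * Real.cos (2 * x)) * (s * (-Real.sin (2 * x) * 2)) * deriv f x
        + Real.exp (s * Real.cos (2 * x)) * deriv (deriv f) x) := fun x => by
    rw [hg1']
    exact ((((hu x).mul (hsin x)).mul (hf x).hasDerivAt).add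
      ((hu x).mul (hf' x).hasDerivAt)).deriv
  have hc4 : ∀ x : ℝ, Real.cos (4 * x) = 1 - 2 * Real.sin (2 * x) ^ 2 := fun x => by
    have h : (4 : ℝ) * x = 2 * (2 * x) := by ring
    rw [h, Real.cos_two_mul, Real.cos_sq']
    ring
  have main : ∀ x, deriv (deriv g) x + 4 * s * Real.sin (2 * x) * deriv g x +
      ((A + C) + (B + 4 * s) * Real.cos (2 * x)) * g x =
      Real.exp (s * Real.cos (2 * x)) *
        (deriv (deriv f) x + (A + B * Real.cos (2 * x) + C * Real.cos (4 * x)) * f x) := by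
    intro x
    rw [hg2 x, hg1', hg x, hc4 x]
    simp only
    linear_combination (-4 * Real.sin (2 * x) ^ 2 * Real.exp (s * Real.cos (2 * x)) * f x) * hs2
  constructor
  · intro h x
    rw [main x, h x, mul_zero]
  · intro h x
    have hx := h x
    rw [main x] at hx
    exact (mul_eq_zero.mp hx).resolve_left (Real.exp_ne_zero _)
end

section
/- Let V : ℤ → ℂ satisfy V(m) = 0 for all odd m, and suppose Σ_{m∈ℤ} |V(m)|² < (1/9)². Then for every positive integer n and every real z with |z| ≤ 1, the series β_n(z) = V(2n) + Σ_{k=1}^{∞} Σ_{j_1,…,j_k} V(n−j_1)·V(j_1−j_2)⋯V(j_{k−1}−j_k)·V(j_k+n) / ((n²−j_1²+z)⋯(n²−j_k²+z)), where for each k the inner sum runs over all k-tuples of integers j_1, …, j_k with j_s ≡ n (mod 2) and j_s ∉ {n, −n}, converges absolutely: the sum over all k ≥ 1 and all such tuples of the absolute values of the summands is finite. -/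
set_option maxHeartbeats 1000000

open Real

-- product over Fin m of a summable nonneg function, summable with tsum = S^m
lemma stmt12_pi {α : Type*} {g : α → ℝ} (hg0 : ∀ a, 0 ≤ g a) (hg : Summable g) :
    ∀ m : ℕ, Summable (fun f : Fin m → α => ∏ i, g (f i)) ∧
      (∑' f : Fin m → α, ∏ i, g (f i)) = (∑' a, g a) ^ m := by
  intro m
  induction m with
  | zero =>
    have h1 : HasSum (fun f : Fin 0 → α => ∏ i, g (f i)) 1 := by
      have := hasSum_single (f := fun f : Fin 0 → α => ∏ i, g (f i)) default
        (fun b hb => absurd (Subsingleton.elim b default) hb)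
      simpa using this
    exact ⟨h1.summable, by simpa using h1.tsum_eq⟩
  | succ m ih =>
    obtain ⟨hS, hT⟩ := ih
    have hmul : Summable (fun x : α × (Fin m → α) => g x.1 * ∏ i, g (x.2 i)) :=
      Summable.mul_of_nonneg (g := fun f : Fin m → α => ∏ i, g (f i)) hg hS
        (fun a => hg0 a) (fun f => Finset.prod_nonneg fun i _ => hg0 _)
    have htsum := Summable.tsum_mul_tsum (g := fun f : Fin m → α => ∏ i, g (f i)) hg hS hmul
    set e : α × (Fin m → α) ≃ (Fin (m + 1) → α) := Fin.consEquiv (fun _ => α) with he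
    have hcomp : ∀ x : α × (Fin m → α),
        (∏ i, g (e x i)) = g x.1 * ∏ i, g (x.2 i) := by
      intro x
      rw [Fin.prod_univ_succ]
      simp [he, Fin.consEquiv]
    constructor
    · refine e.summable_iff.mp ?_
      exact hmul.congr fun x => (hcomp x).symm
    · have := e.tsum_eq (fun f : Fin (m + 1) → α => ∏ i, g (f i))
      rw [← this]
      calc (∑' x : α × (Fin m → α), ∏ i, g (e x i))
          = ∑' x : α × (Fin m → α), g x.1 * ∏ i, g (x.2 i) := by
            exact tsum_congr hcomp
        _ = (∑' a, g a) * ∑' f : Fin m → α, ∏ i, g (f i) := htsum.symm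
        _ = (∑' a, g a) ^ (m + 1) := by rw [hT, pow_succ]; ring

lemma stmt12_int_sq : HasSum (fun j : ℤ => 1 / (j : ℝ) ^ 2) (π ^ 2 / 3) := by
  have h1 : HasSum (fun m : ℕ => (1 : ℝ) / (m : ℝ) ^ 2) (π ^ 2 / 6) := hasSum_zeta_two
  have h2 : HasSum (fun m : ℕ => (1 : ℝ) / ((-(m + 1) : ℤ) : ℝ) ^ 2) (π ^ 2 / 6) := by
    have h3 : HasSum (fun m : ℕ => (1 : ℝ) / ((m + 1 : ℕ) : ℝ) ^ 2) (π ^ 2 / 6) := by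
      have := (hasSum_nat_add_iff (f := fun m : ℕ => (1 : ℝ) / (m : ℝ) ^ 2) 1).2
        (show HasSum _ (π ^ 2 / 6 + ∑ i ∈ Finset.range 1, (1 : ℝ) / (i : ℝ) ^ 2) by simpa using h1)
      simpa using this
    refine h3.congr_fun fun m => ?_
    push_cast
    rw [neg_pow]
    norm_num
  have := h1.of_nat_of_neg_add_one (f := fun j : ℤ => 1 / (j : ℝ) ^ 2) h2
  convert this using 1
  ring

lemma stmt12_shift (c : ℤ) : HasSum (fun j : ℤ => 1 / ((c : ℝ) - (j : ℝ)) ^ 2) (π ^ 2 / 3) := by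
  have h := ((Equiv.subLeft c).hasSum_iff (f := fun j : ℤ => 1 / (j : ℝ) ^ 2)
    (a := π ^ 2 / 3)).2 stmt12_int_sq
  refine h.congr_fun fun j => ?_
  simp only [Function.comp, Equiv.subLeft_apply]
  push_cast
  ring

lemma stmt12_den (n : ℕ) (z : ℝ) (hz : |z| ≤ 1) (j : ℤ)
    (hj : (2 : ℤ) ∣ (j - (n : ℤ)) ∧ j ≠ (n : ℤ) ∧ j ≠ -(n : ℤ)) :
    3 ≤ |(n : ℝ) ^ 2 - (j : ℝ) ^ 2 + z| ∧
      1 / |(n : ℝ) ^ 2 - (j : ℝ) ^ 2 + z| ≤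
        (2 / 3) * (1 / ((n : ℝ) - (j : ℝ)) ^ 2 + 1 / ((n : ℝ) + (j : ℝ)) ^ 2) := by
  obtain ⟨hd, h1, h2⟩ := hj
  set x : ℝ := (n : ℝ) - (j : ℝ) with hxdef
  set y : ℝ := (n : ℝ) + (j : ℝ) with hydef
  have hx : 2 ≤ |x| := by
    have h : (n : ℤ) - j ≤ -2 ∨ 2 ≤ (n : ℤ) - j := by omega
    rcases h with h | h
    · refine le_abs.2 (Or.inr ?_)
      have : ((n : ℤ) - j : ℝ) ≤ -2 := by exact_mod_cast h
      push_cast at this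
      simp only [hxdef]
      linarith
    · refine le_abs.2 (Or.inl ?_)
      have : (2 : ℝ) ≤ ((n : ℤ) - j : ℝ) := by exact_mod_cast h
      push_cast at this
      simp only [hxdef]
      linarith
  have hy : 2 ≤ |y| := by
    have h : (n : ℤ) + j ≤ -2 ∨ 2 ≤ (n : ℤ) + j := by omega
    rcases h with h | h
    · refine le_abs.2 (Or.inr ?_)
      have : ((n : ℤ) + j : ℝ) ≤ -2 := by exact_mod_cast h
      push_cast at this
      simp only [hydef]
      linarith
    · refine le_abs.2 (Or.inl ?_)
      have : (2 : ℝ) ≤ ((n : ℤ) + j : ℝ) := by exact_mod_cast h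
      push_cast at this
      simp only [hydef]
      linarith
  have hd4 : 4 ≤ |x| * |y| := by nlinarith [abs_nonneg x, abs_nonneg y]
  have hxy : (n : ℝ) ^ 2 - (j : ℝ) ^ 2 = x * y := by simp only [hxdef, hydef]; ring
  have habs : |x * y| = |x| * |y| := abs_mul x y
  have hlow : |x * y| - 1 ≤ |x * y + z| := by
    have h5 : |x * y| ≤ |x * y + z| + |z| := by
      calc |x * y| = |(x * y + z) + (-z)| := by ring_nf
        _ ≤ |x * y + z| + |(-z)| := abs_add_le _ _
        _ = |x * y + z| + |z| := by rw [abs_neg]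
    linarith
  have h3 : 3 ≤ |x * y + z| := by linarith
  have h34 : (3 / 4) * (|x| * |y|) ≤ |x * y + z| := by linarith
  refine ⟨by rw [hxy]; exact h3, ?_⟩
  rw [hxy]
  have hpos : 0 < (3 / 4) * (|x| * |y|) := by linarith
  have step1 : 1 / |x * y + z| ≤ 1 / ((3 / 4) * (|x| * |y|)) :=
    one_div_le_one_div_of_le hpos h34
  have hx0 : (0 : ℝ) < |x| := by linarith
  have hy0 : (0 : ℝ) < |y| := by linarith
  have key : 1 / (|x| * |y|) ≤ (1 / 2) * (1 / |x| ^ 2 + 1 / |y| ^ 2) := by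
    have e1 : 1 / (|x| * |y|) = (1 / |x|) * (1 / |y|) := by
      rw [div_mul_div_comm, one_mul]
    have e2 : 1 / |x| ^ 2 = (1 / |x|) ^ 2 := by rw [one_div_pow]
    have e3 : 1 / |y| ^ 2 = (1 / |y|) ^ 2 := by rw [one_div_pow]
    rw [e1, e2, e3]
    nlinarith [sq_nonneg (1 / |x| - 1 / |y|)]
  have step2 : 1 / ((3 / 4) * (|x| * |y|)) = (4 / 3) * (1 / (|x| * |y|)) := by
    have hne : |x| * |y| ≠ 0 := by positivity
    field_simp
  calc 1 / |x * y + z| ≤ 1 / ((3 / 4) * (|x| * |y|)) := step1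
    _ = (4 / 3) * (1 / (|x| * |y|)) := step2
    _ ≤ (4 / 3) * ((1 / 2) * (1 / |x| ^ 2 + 1 / |y| ^ 2)) := by
        exact mul_le_mul_of_nonneg_left key (by norm_num)
    _ = (2 / 3) * (1 / x ^ 2 + 1 / y ^ 2) := by rw [sq_abs, sq_abs]; ring

theorem stmt12 (V : ℤ → ℂ) (hodd : ∀ m : ℤ, Odd m → V m = 0)
    (hsummable : Summable fun m : ℤ => ‖V m‖ ^ 2)
    (hsmall : ∑' m : ℤ, ‖V m‖ ^ 2 < (1 / 9 : ℝ) ^ 2)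
    (n : ℕ) (hn : 0 < n) (z : ℝ) (hz : |z| ≤ 1) :
    Summable (fun p : Σ k : ℕ,
        {j : Fin (k + 1) → ℤ //
          ∀ s, (2 : ℤ) ∣ (j s - (n : ℤ)) ∧ j s ≠ (n : ℤ) ∧ j s ≠ -(n : ℤ)} =>
      (‖V ((n : ℤ) - p.2.1 0)‖ *
          (∏ s : Fin p.1, ‖V (p.2.1 s.castSucc - p.2.1 s.succ)‖) *
          ‖V (p.2.1 (Fin.last p.1) + (n : ℤ))‖) /
        ∏ s : Fin (p.1 + 1), |(n : ℝ) ^ 2 - ((p.2.1 s : ℤ) : ℝ) ^ 2 + z|) := by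
  classical
  -- basic quantities
  set E := ∑' m : ℤ, ‖V m‖ ^ 2 with hEdef
  have hE0 : 0 ≤ E := tsum_nonneg fun m => sq_nonneg _
  set ε := Real.sqrt E with hedef
  have hε0 : 0 ≤ ε := Real.sqrt_nonneg _
  have hεlt : ε < 1 / 9 := by
    have h1 : Real.sqrt E < Real.sqrt ((1 / 9) ^ 2) := Real.sqrt_lt_sqrt hE0 hsmall
    rwa [Real.sqrt_sq (by norm_num : (0:ℝ) ≤ 1/9)] at h1
  have hVle : ∀ m : ℤ, ‖V m‖ ≤ ε := by
    intro m
    have h1 : ‖V m‖ ^ 2 ≤ E := Summable.le_tsum hsummable m fun j _ => sq_nonneg _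
    have h2 := Real.sqrt_le_sqrt h1
    rwa [Real.sqrt_sq (norm_nonneg _)] at h2
  -- the denominator weight function
  set P : ℤ → Prop := fun j => (2 : ℤ) ∣ (j - (n : ℤ)) ∧ j ≠ (n : ℤ) ∧ j ≠ -(n : ℤ) with hPdef
  set g : ℤ → ℝ := fun j => 1 / |(n : ℝ) ^ 2 - (j : ℝ) ^ 2 + z| with hgdef
  set h : ℤ → ℝ := fun j => (2 / 3) * (1 / ((n : ℝ) - (j : ℝ)) ^ 2 + 1 / ((n : ℝ) + (j : ℝ)) ^ 2)
    with hhdef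
  have hg0 : ∀ j, 0 ≤ g j := fun j => by positivity
  have hgh : ∀ j, P j → g j ≤ h j := fun j hj => (stmt12_den n z hz j hj).2
  have hh : HasSum h ((2 / 3) * (π ^ 2 / 3 + π ^ 2 / 3)) := by
    have ha := stmt12_shift (n : ℤ)
    have hb : HasSum (fun j : ℤ => 1 / ((n : ℝ) + (j : ℝ)) ^ 2) (π ^ 2 / 3) := by
      have hc := stmt12_shift (-(n : ℤ))
      have : (fun j : ℤ => 1 / (((-(n : ℤ) : ℤ) : ℝ) - (j : ℝ)) ^ 2)
          = fun j : ℤ => 1 / ((n : ℝ) + (j : ℝ)) ^ 2 := by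
        funext j; push_cast; ring_nf
      rwa [this] at hc
    exact (ha.add hb).mul_left (2 / 3)
  have hh0 : ∀ j, 0 ≤ h j := fun j => by positivity
  have hhsub : Summable (fun a : {j : ℤ // P j} => h a.1) := by
    exact hh.summable.subtype {j | P j}
  have hgsub : Summable (fun a : {j : ℤ // P j} => g a.1) :=
    hhsub.of_nonneg_of_le (fun a => hg0 _) (fun a => hgh a.1 a.2)
  set S := ∑' a : {j : ℤ // P j}, g a.1 with hSdef
  have hS0 : 0 ≤ S := tsum_nonneg fun a => hg0 _
  have hSle : S ≤ (2 / 3) * (π ^ 2 / 3 + π ^ 2 / 3) := by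
    have t1 : S ≤ ∑' a : {j : ℤ // P j}, h a.1 :=
      Summable.tsum_le_tsum (fun a => hgh a.1 a.2) hgsub hhsub
    have t2 : (∑' a : {j : ℤ // P j}, h a.1) ≤ ∑' j : ℤ, h j :=
      Summable.tsum_subtype_le h {j | P j} hh0 hh.summable
    rw [hh.tsum_eq] at t2
    linarith
  have hπ : π ^ 2 ≤ 10 := by nlinarith [pi_lt_d2, pi_pos]
  have hr0 : 0 ≤ ε * S := mul_nonneg hε0 hS0
  have hr1 : ε * S < 1 := by
    have := mul_le_mul hεlt.le hSle hS0 (by norm_num : (0:ℝ) ≤ 1/9)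
    nlinarith
  -- per-slice analysis
  have hslice : ∀ k : ℕ,
      Summable (fun j : {j : Fin (k + 1) → ℤ // ∀ s, P (j s)} =>
        (‖V ((n : ℤ) - j.1 0)‖ *
            (∏ s : Fin k, ‖V (j.1 s.castSucc - j.1 s.succ)‖) *
            ‖V (j.1 (Fin.last k) + (n : ℤ))‖) /
          ∏ s : Fin (k + 1), |(n : ℝ) ^ 2 - ((j.1 s : ℤ) : ℝ) ^ 2 + z|) ∧
      (∑' j : {j : Fin (k + 1) → ℤ // ∀ s, P (j s)},
        (‖V ((n : ℤ) - j.1 0)‖ *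
            (∏ s : Fin k, ‖V (j.1 s.castSucc - j.1 s.succ)‖) *
            ‖V (j.1 (Fin.last k) + (n : ℤ))‖) /
          ∏ s : Fin (k + 1), |(n : ℝ) ^ 2 - ((j.1 s : ℤ) : ℝ) ^ 2 + z|)
        ≤ (ε ^ 2 * S) * (ε * S) ^ k := by
    intro k
    obtain ⟨hPsum, hPtsum⟩ :=
      stmt12_pi (g := fun a : {b : ℤ // P b} => g a.1) (fun a => hg0 _) hgsub (k + 1)
    set Fk : {j : Fin (k + 1) → ℤ // ∀ s, P (j s)} → ℝ := fun j =>
      (‖V ((n : ℤ) - j.1 0)‖ *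
          (∏ s : Fin k, ‖V (j.1 s.castSucc - j.1 s.succ)‖) *
          ‖V (j.1 (Fin.last k) + (n : ℤ))‖) /
        ∏ s : Fin (k + 1), |(n : ℝ) ^ 2 - ((j.1 s : ℤ) : ℝ) ^ 2 + z| with hFkdef
    set Gk : {j : Fin (k + 1) → ℤ // ∀ s, P (j s)} → ℝ := fun j =>
      ε ^ (k + 2) * ∏ s : Fin (k + 1), g (j.1 s) with hGkdef
    let e : {j : Fin (k + 1) → ℤ // ∀ s, P (j s)} ≃ (Fin (k + 1) → {b : ℤ // P b}) :=
      Equiv.subtypePiEquivPi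
    have hGsum : Summable Gk := by
      refine (Equiv.summable_iff e.symm).mp ?_
      exact hPsum.mul_left _
    have hGtsum : (∑' j, Gk j) = ε ^ (k + 2) * S ^ (k + 1) := by
      rw [hSdef, ← hPtsum, ← tsum_mul_left]
      exact (e.symm.tsum_eq Gk).symm
    have hden_pos : ∀ j : {j : Fin (k + 1) → ℤ // ∀ s, P (j s)},
        0 < ∏ s : Fin (k + 1), |(n : ℝ) ^ 2 - ((j.1 s : ℤ) : ℝ) ^ 2 + z| := by
      intro j
      refine Finset.prod_pos fun s _ => ?_
      have := (stmt12_den n z hz (j.1 s) (j.2 s)).1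
      linarith
    have hF0 : ∀ j, 0 ≤ Fk j := by
      intro j
      rw [hFkdef]
      exact div_nonneg (by positivity) (le_of_lt (hden_pos j))
    have hFG : ∀ j, Fk j ≤ Gk j := by
      intro j
      have hnum : ‖V ((n : ℤ) - j.1 0)‖ *
          (∏ s : Fin k, ‖V (j.1 s.castSucc - j.1 s.succ)‖) *
          ‖V (j.1 (Fin.last k) + (n : ℤ))‖ ≤ ε ^ (k + 2) := by
        have h1 : (∏ s : Fin k, ‖V (j.1 s.castSucc - j.1 s.succ)‖) ≤ ε ^ k := by
          calc (∏ s : Fin k, ‖V (j.1 s.castSucc - j.1 s.succ)‖)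
              ≤ ∏ _s : Fin k, ε :=
                Finset.prod_le_prod (fun s _ => norm_nonneg _) (fun s _ => hVle _)
            _ = ε ^ k := by simp [Finset.prod_const]
        have h2 := hVle ((n : ℤ) - j.1 0)
        have h3 := hVle (j.1 (Fin.last k) + (n : ℤ))
        calc ‖V ((n : ℤ) - j.1 0)‖ *
              (∏ s : Fin k, ‖V (j.1 s.castSucc - j.1 s.succ)‖) *
              ‖V (j.1 (Fin.last k) + (n : ℤ))‖
            ≤ ε * ε ^ k * ε := by
              apply mul_le_mul _ h3 (norm_nonneg _) (by positivity)
              exact mul_le_mul h2 h1 (Finset.prod_nonneg fun s _ => norm_nonneg _) hε0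
          _ = ε ^ (k + 2) := by ring
      have hstep : Fk j ≤ ε ^ (k + 2) /
          ∏ s : Fin (k + 1), |(n : ℝ) ^ 2 - ((j.1 s : ℤ) : ℝ) ^ 2 + z| := by
        rw [hFkdef]
        exact (div_le_div_iff_of_pos_right (hden_pos j)).mpr hnum
      have heq : ε ^ (k + 2) /
          (∏ s : Fin (k + 1), |(n : ℝ) ^ 2 - ((j.1 s : ℤ) : ℝ) ^ 2 + z|) = Gk j := by
        rw [hGkdef]
        simp only [hgdef, one_div]
        rw [div_eq_mul_inv, ← Finset.prod_inv_distrib]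
      rw [← heq]
      exact hstep
    have hFsum : Summable Fk := Summable.of_nonneg_of_le hF0 hFG hGsum
    refine ⟨hFsum, ?_⟩
    have t := Summable.tsum_le_tsum hFG hFsum hGsum
    rw [hGtsum] at t
    calc (∑' j, Fk j) ≤ ε ^ (k + 2) * S ^ (k + 1) := t
      _ = (ε ^ 2 * S) * (ε * S) ^ k := by ring
  -- assemble
  refine (summable_sigma_of_nonneg ?_).2 ⟨fun k => (hslice k).1, ?_⟩
  · rintro ⟨k, j⟩
    have hd : 0 ≤ ∏ s : Fin (k + 1), |(n : ℝ) ^ 2 - ((j.1 s : ℤ) : ℝ) ^ 2 + z| :=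
      Finset.prod_nonneg fun s _ => abs_nonneg _
    exact div_nonneg (by positivity) hd
  · refine Summable.of_nonneg_of_le (fun k => tsum_nonneg fun j => ?_)
      (fun k => (hslice k).2)
      ((summable_geometric_of_lt_one hr0 hr1).mul_left (ε ^ 2 * S))
    have hd : 0 ≤ ∏ s : Fin (k + 1), |(n : ℝ) ^ 2 - ((j.1 s : ℤ) : ℝ) ^ 2 + z| :=
      Finset.prod_nonneg fun s _ => abs_nonneg _
    exact div_nonneg (by positivity) hd
end

section
/- Fix a positive integer n, let ξ ∈ X⁺ be a walk with ν+1 steps, let μ be a positive integer, and let (i_1, …, i_μ) be a μ-tuple of integers with i_s ≡ n (mod 2) and i_s ∉ {n, −n} for each s. Let X_ξ(i_1, …, i_μ) be the set of walks x ∈ X with ν+1+μ steps such that the tuple (i_1, …, i_μ) and the vertex sequence of ξ are complementary subsequences of the vertex sequence of x. Then the cardinality of X_ξ(i_1, …, i_μ) is at most 5^μ. -/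
open Real

noncomputable section

/-- The `s`-th interior vertex `j_{s+1} = -n + x_1 + ⋯ + x_{s+1}` of a walk starting at `-n`
with steps `step 0, …, step ν`. -/
def vertexOf (n : ℕ) {ν : ℕ} (step : Fin (ν + 1) → ℤ) (s : Fin ν) : ℤ :=
  -(n : ℤ) + ∑ k ∈ Finset.univ.filter (fun k : Fin (ν + 1) => (k : ℕ) ≤ (s : ℕ)), step k

/-- A walk from `-n` to `n` with `ν + 1` steps, each equal to `±2` or `±4`, whose interior
vertices avoid `±n`.  The set of all such walks is `X`. -/
structure Walk (n : ℕ) where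
  ν : ℕ
  step : Fin (ν + 1) → ℤ
  step_mem : ∀ k, step k = -4 ∨ step k = -2 ∨ step k = 2 ∨ step k = 4
  sum_eq : -(n : ℤ) + ∑ k, step k = (n : ℤ)
  vertex_ne : ∀ s : Fin ν, vertexOf n step s ≠ (n : ℤ) ∧ vertexOf n step s ≠ -(n : ℤ)

/-- A walk belongs to `X⁺` iff all its steps equal `2` or `4`. -/
def Walk.IsPos {n : ℕ} (w : Walk n) : Prop := ∀ k, w.step k = 2 ∨ w.step k = 4

/-- The tuple `i` and the vertex sequence of `ξ` are complementary subsequences of the vertex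
sequence of `x`. -/
def Complementary (n : ℕ) (ξ x : Walk n) {μ : ℕ} (i : Fin μ → ℤ) : Prop :=
  ∃ (e : Fin ξ.ν → Fin x.ν) (f : Fin μ → Fin x.ν),
    StrictMono e ∧ StrictMono f ∧ (∀ s t, e s ≠ f t) ∧
    (∀ p : Fin x.ν, (∃ s, e s = p) ∨ (∃ t, f t = p)) ∧
    (∀ s, vertexOf n x.step (e s) = vertexOf n ξ.step s) ∧
    (∀ t, vertexOf n x.step (f t) = i t)

/-- ℕ-indexed interior vertex; agrees definitionally with `vertexOf`. -/
def vtxN (n : ℕ) {m : ℕ} (step : Fin (m + 1) → ℤ) (p : ℕ) : ℤ :=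
  -(n : ℤ) + ∑ k ∈ Finset.univ.filter (fun k : Fin (m + 1) => (k : ℕ) ≤ p), step k

lemma vertexOf_eq_vtxN (n : ℕ) {m : ℕ} (step : Fin (m + 1) → ℤ) (s : Fin m) :
    vertexOf n step s = vtxN n step (s : ℕ) := rfl

lemma vtxN_succ (n : ℕ) {m : ℕ} (step : Fin (m + 1) → ℤ) (p : ℕ) (hp : p + 1 ≤ m) :
    vtxN n step (p + 1) = vtxN n step p + step ⟨p + 1, by omega⟩ := by
  unfold vtxN
  have h : (Finset.univ.filter (fun k : Fin (m + 1) => (k : ℕ) ≤ p + 1))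
      = insert (⟨p + 1, by omega⟩ : Fin (m + 1))
          (Finset.univ.filter (fun k : Fin (m + 1) => (k : ℕ) ≤ p)) := by
    ext k
    simp [Fin.ext_iff]
    omega
  rw [h, Finset.sum_insert (by simp only [Finset.mem_filter, Finset.mem_univ, true_and]; omega)]
  ring

lemma vtxN_zero (n : ℕ) {m : ℕ} (step : Fin (m + 1) → ℤ) :
    vtxN n step 0 = -(n : ℤ) + step ⟨0, by omega⟩ := by
  unfold vtxN
  have h : (Finset.univ.filter (fun k : Fin (m + 1) => (k : ℕ) ≤ 0))
      = {(⟨0, by omega⟩ : Fin (m + 1))} := by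
    ext k
    simp only [Finset.mem_filter, Finset.mem_univ, true_and, Finset.mem_singleton, Fin.ext_iff, Fin.val_mk]; omega
  rw [h, Finset.sum_singleton]

lemma vtxN_zero' (n : ℕ) {m : ℕ} (step : Fin (m + 1) → ℤ) (k : Fin (m + 1))
    (hk : (k : ℕ) = 0) : vtxN n step 0 = -(n : ℤ) + step k := by
  have hkk : k = ⟨0, by omega⟩ := Fin.ext hk
  rw [hkk]
  exact vtxN_zero n step

lemma vtxN_succ' (n : ℕ) {m : ℕ} (step : Fin (m + 1) → ℤ) (k : Fin (m + 1)) (p : ℕ)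
    (hk : (k : ℕ) = p + 1) (hp : p + 1 ≤ m) :
    vtxN n step (p + 1) = vtxN n step p + step k := by
  have hkk : k = ⟨p + 1, by omega⟩ := Fin.ext hk
  rw [hkk]
  exact vtxN_succ n step p hp

lemma walk_ext {n : ℕ} (w1 w2 : Walk n) (hν : w1.ν = w2.ν)
    (hs : ∀ k : Fin (w1.ν + 1), w1.step k = w2.step ⟨(k : ℕ), by omega⟩) : w1 = w2 := by
  obtain ⟨ν1, s1, a1, b1, c1⟩ := w1
  obtain ⟨ν2, s2, a2, b2, c2⟩ := w2
  dsimp at hν hs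
  subst hν
  have : s1 = s2 := by
    funext k
    have := hs k
    simpa using this
  subst this
  rfl

lemma vtxN_strictMono {n : ℕ} (ξ : Walk n) (hξ : ξ.IsPos) :
    ∀ b a : ℕ, a < b → b < ξ.ν → vtxN n ξ.step a < vtxN n ξ.step b := by
  intro b
  induction b with
  | zero => intro a ha _; omega
  | succ m IH =>
    intro a ha hb
    have hstep := vtxN_succ n ξ.step m (by omega)
    have hpos : 0 < ξ.step ⟨m + 1, by omega⟩ := by
      rcases hξ ⟨m + 1, by omega⟩ with h | h <;> omega
    rcases Nat.lt_or_ge a m with h | h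
    · have := IH a h (by omega)
      omega
    · have : a = m := by omega
      subst this
      omega

lemma vtxN_succ_mem {n : ℕ} (w : Walk n) (p : ℕ) (hp : p + 1 ≤ w.ν) :
    ∃ d : ℤ, vtxN n w.step (p + 1) = vtxN n w.step p + d ∧
      (d = -4 ∨ d = -2 ∨ d = 2 ∨ d = 4) :=
  ⟨w.step ⟨p + 1, by omega⟩, vtxN_succ n w.step p hp, w.step_mem _⟩

lemma count_e {N ν μ : ℕ} (e : Fin ν → Fin N) (f : Fin μ → Fin N)
    (he : StrictMono e) (hf : StrictMono f) (hd : ∀ s t, e s ≠ f t)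
    (hc : ∀ p : Fin N, (∃ s, e s = p) ∨ (∃ t, f t = p)) (s : Fin ν) :
    (s : ℕ) + (Finset.univ.filter (fun u : Fin μ => (f u : ℕ) < (e s : ℕ))).card
      = (e s : ℕ) := by
  classical
  have hpart : Finset.Iio (e s)
      = (Finset.Iio s).image e
        ∪ (Finset.univ.filter (fun u : Fin μ => (f u : ℕ) < (e s : ℕ))).image f := by
    ext p
    simp only [Finset.mem_Iio, Finset.mem_union, Finset.mem_image, Finset.mem_filter,
      Finset.mem_univ, true_and]
    constructor
    · intro hp
      rcases hc p with ⟨s', rfl⟩ | ⟨t', rfl⟩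
      · exact Or.inl ⟨s', he.lt_iff_lt.mp hp, rfl⟩
      · exact Or.inr ⟨t', hp, rfl⟩
    · rintro (⟨s', hs', rfl⟩ | ⟨t', ht', rfl⟩)
      · exact he hs'
      · exact ht'
  have hdisj : Disjoint ((Finset.Iio s).image e)
      ((Finset.univ.filter (fun u : Fin μ => (f u : ℕ) < (e s : ℕ))).image f) := by
    rw [Finset.disjoint_left]
    intro p hp1 hp2
    rw [Finset.mem_image] at hp1 hp2
    obtain ⟨s', _, rfl⟩ := hp1
    obtain ⟨t', _, ht'⟩ := hp2
    exact hd s' t' ht'.symm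
  have hcard := congrArg Finset.card hpart
  rw [Finset.card_union_of_disjoint hdisj,
    Finset.card_image_of_injective _ he.injective,
    Finset.card_image_of_injective _ hf.injective,
    Fin.card_Iio, Fin.card_Iio] at hcard
  omega

lemma last_step {n : ℕ} (w : Walk n) (h : 0 < w.ν) :
    w.step ⟨w.ν, by omega⟩ = (n : ℤ) - vtxN n w.step (w.ν - 1) := by
  have hu : (Finset.univ : Finset (Fin (w.ν + 1)))
      = insert (⟨w.ν, by omega⟩ : Fin (w.ν + 1))
          (Finset.univ.filter (fun k : Fin (w.ν + 1) => (k : ℕ) ≤ w.ν - 1)) := by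
    ext k
    have := k.isLt
    simp [Fin.ext_iff]
    omega
  have hsum := w.sum_eq
  rw [hu, Finset.sum_insert (by simp only [Finset.mem_filter, Finset.mem_univ, true_and]; omega)] at hsum
  unfold vtxN
  omega

lemma last_step' {n : ℕ} (w : Walk n) (k : Fin (w.ν + 1)) (hk : (k : ℕ) = w.ν)
    (h : 0 < w.ν) : w.step k = (n : ℤ) - vtxN n w.step (w.ν - 1) := by
  have hkk : k = ⟨w.ν, by omega⟩ := Fin.ext hk
  rw [hkk]
  exact last_step w h

def enc4 (d : ℤ) : Fin 4 :=
  if d = -4 then 0 else if d = -2 then 1 else if d = 2 then 2 else 3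

lemma enc4_inj {d e : ℤ}
    (hd : d = -4 ∨ d = -2 ∨ d = 2 ∨ d = 4) (he : e = -4 ∨ e = -2 ∨ e = 2 ∨ e = 4)
    (h : enc4 d = enc4 e) : d = e := by
  rcases hd with rfl | rfl | rfl | rfl <;> rcases he with rfl | rfl | rfl | rfl <;>
    simp_all [enc4]

lemma none_case {N μ : ℕ} (f : Fin μ → Fin N) (hf : StrictMono f) (t : Fin μ)
    (h : ¬(((f t : ℕ) + 1 < N) ∧ ∀ u, (f u : ℕ) ≠ (f t : ℕ) + 1)) :
    ((f t : ℕ) + 1 = N) ∨ (∃ u : Fin μ, (t : ℕ) < (u : ℕ) ∧ (f u : ℕ) = (f t : ℕ) + 1) := by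
  push_neg at h
  by_cases hend : (f t : ℕ) + 1 = N
  · exact Or.inl hend
  · have hlt : (f t : ℕ) + 1 < N := by have := (f t).isLt; omega
    obtain ⟨u, hu⟩ := h hlt
    refine Or.inr ⟨u, ?_, hu⟩
    have : t < u := hf.lt_iff_lt.mp (by rw [Fin.lt_def]; omega)
    exact Fin.lt_def.mp this

/-- The label of the `t`-th inserted vertex, recording how the walk continues right after it. -/
noncomputable def labelMap (n : ℕ) (ξ : Walk n) {μ : ℕ} (i : Fin μ → ℤ) (x : Walk n)
    (h : Complementary n ξ x i) (t : Fin μ) : Option (Fin 4) :=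
  if ((Classical.choose (Classical.choose_spec h) t : ℕ) + 1 < x.ν)
      ∧ ∀ u, (Classical.choose (Classical.choose_spec h) u : ℕ)
          ≠ (Classical.choose (Classical.choose_spec h) t : ℕ) + 1
  then some (enc4 (vtxN n x.step ((Classical.choose (Classical.choose_spec h) t : ℕ) + 1) - i t))
  else none

theorem stmt13 (n : ℕ) (hn : 0 < n) (ξ : Walk n) (hξ : ξ.IsPos)
    (μ : ℕ) (hμ : 0 < μ) (i : Fin μ → ℤ)
    (hi : ∀ t, (2 : ℤ) ∣ (i t - (n : ℤ)) ∧ i t ≠ (n : ℤ) ∧ i t ≠ -(n : ℤ)) :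
    Nat.card {x : Walk n // x.ν = ξ.ν + μ ∧ Complementary n ξ x i} ≤ 5 ^ μ := by
  classical
  refine le_trans (Nat.card_le_card_of_injective
    (fun x : {x : Walk n // x.ν = ξ.ν + μ ∧ Complementary n ξ x i} =>
      labelMap n ξ i x.1 x.2.2) ?_)
    (le_of_eq (by simp [Nat.card_eq_fintype_card]))
  intro x1 x2 hL
  have hν1 : x1.1.ν = ξ.ν + μ := x1.2.1
  have hν2 : x2.1.ν = ξ.ν + μ := x2.2.1
  have hspec1 := Classical.choose_spec (Classical.choose_spec x1.2.2)
  have hspec2 := Classical.choose_spec (Classical.choose_spec x2.2.2)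
  set f1 := Classical.choose (Classical.choose_spec x1.2.2) with hf1def
  set f2 := Classical.choose (Classical.choose_spec x2.2.2) with hf2def
  set e1 := Classical.choose x1.2.2 with he1def
  set e2 := Classical.choose x2.2.2 with he2def
  obtain ⟨hem1, hfm1, hdj1, hc1, hve1, hvf1⟩ := hspec1
  obtain ⟨hem2, hfm2, hdj2, hc2, hve2, hvf2⟩ := hspec2
  have hL' : ∀ t, labelMap n ξ i x1.1 x1.2.2 t = labelMap n ξ i x2.1 x2.2.2 t :=
    fun t => congrFun hL t
  -- the key analysis in the case where both labels are `some`
  have hsome : ∀ t : Fin μ,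
      ((f1 t : ℕ) + 1 < x1.1.ν ∧ ∀ u, (f1 u : ℕ) ≠ (f1 t : ℕ) + 1) →
      ((f2 t : ℕ) + 1 < x2.1.ν ∧ ∀ u, (f2 u : ℕ) ≠ (f2 t : ℕ) + 1) →
      enc4 (vtxN n x1.1.step ((f1 t : ℕ) + 1) - i t)
        = enc4 (vtxN n x2.1.step ((f2 t : ℕ) + 1) - i t) →
      (f1 t : ℕ) = (f2 t : ℕ) := by
    intro t h1 h2 henc
    obtain ⟨s1, hs1⟩ : ∃ s, e1 s = (⟨(f1 t : ℕ) + 1, h1.1⟩ : Fin x1.1.ν) := by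
      rcases hc1 ⟨(f1 t : ℕ) + 1, h1.1⟩ with h | ⟨u, hu⟩
      · exact h
      · exact absurd (by have := congrArg Fin.val hu; simpa using this) (h1.2 u)
    obtain ⟨s2, hs2⟩ : ∃ s, e2 s = (⟨(f2 t : ℕ) + 1, h2.1⟩ : Fin x2.1.ν) := by
      rcases hc2 ⟨(f2 t : ℕ) + 1, h2.1⟩ with h | ⟨u, hu⟩
      · exact h
      · exact absurd (by have := congrArg Fin.val hu; simpa using this) (h2.2 u)
    have hval1 : (e1 s1 : ℕ) = (f1 t : ℕ) + 1 := by rw [hs1]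
    have hval2 : (e2 s2 : ℕ) = (f2 t : ℕ) + 1 := by rw [hs2]
    have hveq1 : vtxN n x1.1.step ((f1 t : ℕ) + 1) = vtxN n ξ.step (s1 : ℕ) := by
      have h := hve1 s1
      rw [hs1] at h
      exact h
    have hveq2 : vtxN n x2.1.step ((f2 t : ℕ) + 1) = vtxN n ξ.step (s2 : ℕ) := by
      have h := hve2 s2
      rw [hs2] at h
      exact h
    have hit1 : vtxN n x1.1.step ((f1 t : ℕ)) = i t := hvf1 t
    have hit2 : vtxN n x2.1.step ((f2 t : ℕ)) = i t := hvf2 t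
    obtain ⟨d1, hd1e, hd1m⟩ := vtxN_succ_mem x1.1 (f1 t : ℕ) (by omega)
    obtain ⟨d2, hd2e, hd2m⟩ := vtxN_succ_mem x2.1 (f2 t : ℕ) (by omega)
    have ha1 : vtxN n x1.1.step ((f1 t : ℕ) + 1) - i t = d1 := by omega
    have ha2 : vtxN n x2.1.step ((f2 t : ℕ) + 1) - i t = d2 := by omega
    rw [ha1, ha2] at henc
    have hd12 : d1 = d2 := enc4_inj hd1m hd2m henc
    have hξeq : vtxN n ξ.step (s1 : ℕ) = vtxN n ξ.step (s2 : ℕ) := by omega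
    have hss : (s1 : ℕ) = (s2 : ℕ) := by
      rcases Nat.lt_trichotomy (s1 : ℕ) (s2 : ℕ) with h | h | h
      · have := vtxN_strictMono ξ hξ (s2 : ℕ) (s1 : ℕ) h s2.isLt
        omega
      · exact h
      · have := vtxN_strictMono ξ hξ (s1 : ℕ) (s2 : ℕ) h s1.isLt
        omega
    have c1 := count_e e1 f1 hem1 hfm1 hdj1 hc1 s1
    have c2 := count_e e2 f2 hem2 hfm2 hdj2 hc2 s2
    have hfil1 : Finset.univ.filter (fun u : Fin μ => (f1 u : ℕ) < (e1 s1 : ℕ))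
        = Finset.Iic t := by
      ext u
      simp only [Finset.mem_filter, Finset.mem_univ, true_and, Finset.mem_Iic, hval1]
      constructor
      · intro h
        exact hfm1.le_iff_le.mp (by rw [Fin.le_def]; omega)
      · intro h
        have := hfm1.le_iff_le.mpr h
        rw [Fin.le_def] at this
        omega
    have hfil2 : Finset.univ.filter (fun u : Fin μ => (f2 u : ℕ) < (e2 s2 : ℕ))
        = Finset.Iic t := by
      ext u
      simp only [Finset.mem_filter, Finset.mem_univ, true_and, Finset.mem_Iic, hval2]
      constructor
      · intro h
        exact hfm2.le_iff_le.mp (by rw [Fin.le_def]; omega)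
      · intro h
        have := hfm2.le_iff_le.mpr h
        rw [Fin.le_def] at this
        omega
    rw [hfil1, Fin.card_Iic] at c1
    rw [hfil2, Fin.card_Iic] at c2
    omega
  -- main downward induction: the inserted positions agree
  have hkey : ∀ k : ℕ, ∀ t : Fin μ, μ = (t : ℕ) + k + 1 → (f1 t : ℕ) = (f2 t : ℕ) := by
    intro k
    induction k with
    | zero =>
      intro t ht
      have hLt := hL' t
      unfold labelMap at hLt
      rw [← hf1def, ← hf2def] at hLt
      by_cases hA : ((f1 t : ℕ) + 1 < x1.1.ν ∧ ∀ u, (f1 u : ℕ) ≠ (f1 t : ℕ) + 1) <;>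
        by_cases hB : ((f2 t : ℕ) + 1 < x2.1.ν ∧ ∀ u, (f2 u : ℕ) ≠ (f2 t : ℕ) + 1)
      · rw [if_pos hA, if_pos hB] at hLt
        simp only [Option.some.injEq] at hLt
        exact hsome t hA hB hLt
      · rw [if_pos hA, if_neg hB] at hLt
        simp at hLt
      · rw [if_neg hA, if_pos hB] at hLt
        simp at hLt
      · rcases none_case f1 hfm1 t hA with hend1 | ⟨u, hut, huv⟩
        · rcases none_case f2 hfm2 t hB with hend2 | ⟨u, hut, huv⟩
          · omega
          · have := u.isLt
            omega
        · have := u.isLt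
          omega
    | succ k IH =>
      intro t ht
      obtain ⟨t', ht'⟩ : ∃ t' : Fin μ, (t' : ℕ) = (t : ℕ) + 1 := ⟨⟨(t : ℕ) + 1, by omega⟩, rfl⟩
      have htt'1 : (f1 t : ℕ) < (f1 t' : ℕ) := by
        have := hfm1 (show t < t' by rw [Fin.lt_def]; omega)
        exact Fin.lt_def.mp this
      have htt'2 : (f2 t : ℕ) < (f2 t' : ℕ) := by
        have := hfm2 (show t < t' by rw [Fin.lt_def]; omega)
        exact Fin.lt_def.mp this
      have hb1 := (f1 t').isLt
      have hb2 := (f2 t').isLt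
      have hIH : (f1 t' : ℕ) = (f2 t' : ℕ) := IH t' (by omega)
      have hLt := hL' t
      unfold labelMap at hLt
      rw [← hf1def, ← hf2def] at hLt
      by_cases hA : ((f1 t : ℕ) + 1 < x1.1.ν ∧ ∀ u, (f1 u : ℕ) ≠ (f1 t : ℕ) + 1) <;>
        by_cases hB : ((f2 t : ℕ) + 1 < x2.1.ν ∧ ∀ u, (f2 u : ℕ) ≠ (f2 t : ℕ) + 1)
      · rw [if_pos hA, if_pos hB] at hLt
        simp only [Option.some.injEq] at hLt
        exact hsome t hA hB hLt
      · rw [if_pos hA, if_neg hB] at hLt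
        simp at hLt
      · rw [if_neg hA, if_pos hB] at hLt
        simp at hLt
      · have ha1 : (f1 t' : ℕ) = (f1 t : ℕ) + 1 := by
          rcases none_case f1 hfm1 t hA with hend1 | ⟨u, hut, huv⟩
          · omega
          · have hle : f1 t' ≤ f1 u := hfm1.le_iff_le.mpr (by rw [Fin.le_def]; omega)
            rw [Fin.le_def] at hle
            omega
        have ha2 : (f2 t' : ℕ) = (f2 t : ℕ) + 1 := by
          rcases none_case f2 hfm2 t hB with hend2 | ⟨u, hut, huv⟩
          · omega
          · have hle : f2 t' ≤ f2 u := hfm2.le_iff_le.mpr (by rw [Fin.le_def]; omega)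
            rw [Fin.le_def] at hle
            omega
        omega
  have hfeq : ∀ t : Fin μ, (f1 t : ℕ) = (f2 t : ℕ) := fun t =>
    hkey (μ - (t : ℕ) - 1) t (by omega)
  -- the two walks have the same vertex sequence
  have hV : ∀ p, p < ξ.ν + μ → vtxN n x1.1.step p = vtxN n x2.1.step p := by
    intro p hp
    by_cases hpf : ∃ u : Fin μ, (f1 u : ℕ) = p
    · obtain ⟨u, hu⟩ := hpf
      have h1 : vtxN n x1.1.step ((f1 u : ℕ)) = i u := hvf1 u
      have h2 : vtxN n x2.1.step ((f2 u : ℕ)) = i u := hvf2 u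
      rw [hu] at h1
      rw [← hfeq u, hu] at h2
      rw [h1, h2]
    · have hpf2 : ¬ ∃ u : Fin μ, (f2 u : ℕ) = p := fun ⟨u, hu⟩ =>
        hpf ⟨u, by rw [hfeq u]; exact hu⟩
      obtain ⟨s, hs⟩ : ∃ s, e1 s = (⟨p, by omega⟩ : Fin x1.1.ν) := by
        rcases hc1 ⟨p, by omega⟩ with h | ⟨u, hu⟩
        · exact h
        · exact absurd ⟨u, by have := congrArg Fin.val hu; simpa using this⟩ hpf
      obtain ⟨s', hs'⟩ : ∃ s, e2 s = (⟨p, by omega⟩ : Fin x2.1.ν) := by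
        rcases hc2 ⟨p, by omega⟩ with h | ⟨u, hu⟩
        · exact h
        · exact absurd ⟨u, by have := congrArg Fin.val hu; simpa using this⟩ hpf2
      have hval1 : (e1 s : ℕ) = p := by rw [hs]
      have hval2 : (e2 s' : ℕ) = p := by rw [hs']
      have c1 := count_e e1 f1 hem1 hfm1 hdj1 hc1 s
      have c2 := count_e e2 f2 hem2 hfm2 hdj2 hc2 s'
      have hfil : Finset.univ.filter (fun u : Fin μ => (f1 u : ℕ) < (e1 s : ℕ))
          = Finset.univ.filter (fun u : Fin μ => (f2 u : ℕ) < (e2 s' : ℕ)) := by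
        ext u
        simp [hfeq u, hval1, hval2]
      rw [hfil] at c1
      have hss : (s : ℕ) = (s' : ℕ) := by omega
      have hxv1 : vtxN n x1.1.step p = vtxN n ξ.step (s : ℕ) := by
        have h := hve1 s
        rw [hs] at h
        exact h
      have hxv2 : vtxN n x2.1.step p = vtxN n ξ.step (s' : ℕ) := by
        have h := hve2 s'
        rw [hs'] at h
        exact h
      rw [hxv1, hxv2, hss]
  -- hence the same steps
  have hstep : ∀ (k : ℕ) (hk1 : k < x1.1.ν + 1) (hk2 : k < x2.1.ν + 1),
      x1.1.step ⟨k, hk1⟩ = x2.1.step ⟨k, hk2⟩ := by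
    intro k hk1 hk2
    rcases k with _ | m
    · have a1 := vtxN_zero' n x1.1.step ⟨0, hk1⟩ rfl
      have a2 := vtxN_zero' n x2.1.step ⟨0, hk2⟩ rfl
      have hv0 := hV 0 (by omega)
      omega
    · by_cases hm : m + 1 < x1.1.ν
      · have a1 := vtxN_succ' n x1.1.step ⟨m + 1, hk1⟩ m rfl (by omega)
        have a2 := vtxN_succ' n x2.1.step ⟨m + 1, hk2⟩ m rfl (by omega)
        have hva := hV (m + 1) (by omega)
        have hvb := hV m (by omega)
        omega
      · have a1 := last_step' x1.1 ⟨m + 1, hk1⟩ (by show m + 1 = x1.1.ν; omega) (by omega)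
        have a2 := last_step' x2.1 ⟨m + 1, hk2⟩ (by show m + 1 = x2.1.ν; omega) (by omega)
        have e1' : x1.1.ν - 1 = m := by omega
        have e2' : x2.1.ν - 1 = m := by omega
        rw [e1'] at a1
        rw [e2'] at a2
        have hv := hV m (by omega)
        omega
  exact Subtype.ext (walk_ext x1.1 x2.1 (by omega)
    (fun k => hstep (k : ℕ) k.isLt (by omega)))
end
end

section
/- For every integer m ≥ 3, Σ_{i=1}^{m−2} [ Π_{j=1}^{i} ((2m−1)² − (−2m+1+4j)²)^{−1} · Π_{j=i}^{m−2} ((2m−1)² − (−2m+3+4j)²)^{−1} ] + Π_{j=0}^{m−2} ((2m−1)² − (−2m+3+4j)²)^{−1} + Π_{j=1}^{m−1} ((2m−1)² − (−2m+1+4j)²)^{−1} = (8/2^{3m}) · [ (1/((2m−3)!!)²) · Σ_{i=1}^{m−2} ((2m−2i−3)!!·(2i−1)!!)/(i!·(m−1−i)!) + 2/((2m−3)!!·(m−1)!) ]. -/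
private lemma aux_odd_step (i : ℕ) :
    (2*i+1).doubleFactorial = (2*i+1) * (2*i-1).doubleFactorial := by
  cases i with
  | zero => simp [Nat.doubleFactorial]
  | succ n =>
    have h1 : 2*(n+1)+1 = (2*n+1)+2 := by ring
    have h2 : 2*(n+1)-1 = 2*n+1 := by omega
    rw [h1, h2, Nat.doubleFactorial_add_two]

private lemma auxA (k : ℕ) : ∀ i ≤ k+1,
    (2*k+3-2*i).doubleFactorial * ∏ j ∈ Finset.Icc 1 i, (2*k+5-2*j)
      = (2*k+3).doubleFactorial := by
  intro i
  induction i with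
  | zero => intro _; simp
  | succ i ih =>
    intro hi
    rw [Finset.prod_Icc_succ_top (by omega)]
    have e1 : 2*k+5-2*(i+1) = (2*k+3-2*(i+1)) + 2 := by omega
    have e2 : (2*k+3-2*(i+1)) + 2 = 2*k+3-2*i := by omega
    calc (2*k+3-2*(i+1)).doubleFactorial *
          ((∏ j ∈ Finset.Icc 1 i, (2*k+5-2*j)) * (2*k+5-2*(i+1)))
        = (((2*k+3-2*(i+1)) + 2) * (2*k+3-2*(i+1)).doubleFactorial) *
            ∏ j ∈ Finset.Icc 1 i, (2*k+5-2*j) := by rw [e1]; ring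
      _ = ((2*k+3-2*(i+1)) + 2).doubleFactorial *
            ∏ j ∈ Finset.Icc 1 i, (2*k+5-2*j) := by
            rw [Nat.doubleFactorial_add_two]
      _ = (2*k+3-2*i).doubleFactorial * ∏ j ∈ Finset.Icc 1 i, (2*k+5-2*j) := by
            rw [e2]
      _ = (2*k+3).doubleFactorial := ih (by omega)

private lemma auxA2 (k : ℕ) : ∀ i ≤ k+2,
    (2*k+3-2*i).doubleFactorial * ∏ j ∈ Finset.Icc 1 i, (2*k+5-2*j)
      = (2*k+3).doubleFactorial := by
  intro i hi
  rcases Nat.lt_or_ge i (k+2) with h | h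
  · exact auxA k i (by omega)
  · have hi2 : i = k+2 := by omega
    subst hi2
    rw [Finset.prod_Icc_succ_top (by omega)]
    have h1 : 2*k+3-2*(k+2) = 0 := by omega
    have h2 : 2*k+5-2*(k+2) = 1 := by omega
    have h3 := auxA k (k+1) (le_refl _)
    have h4 : 2*k+3-2*(k+1) = 1 := by omega
    rw [h4] at h3
    rw [h1, h2]
    simpa [Nat.doubleFactorial] using h3

private lemma auxB (k : ℕ) : ∀ d i, i + d = k + 2 →
    (2*i-1).doubleFactorial * ∏ j ∈ Finset.Icc i (k+1), (2*j+1)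
      = (2*k+3).doubleFactorial := by
  intro d
  induction d with
  | zero =>
    intro i hi
    have : i = k+2 := by omega
    subst this
    rw [Finset.Icc_eq_empty (by omega)]
    simp only [Finset.prod_empty, mul_one]
    congr 1
  | succ d ih =>
    intro i hi
    have hik : i ≤ k+1 := by omega
    rw [Finset.Icc_eq_cons_Ioc hik, Finset.prod_cons, ← Finset.Icc_add_one_left_eq_Ioc]
    calc (2*i-1).doubleFactorial *
          ((2*i+1) * ∏ j ∈ Finset.Icc (i+1) (k+1), (2*j+1))
        = ((2*i+1) * (2*i-1).doubleFactorial) *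
            ∏ j ∈ Finset.Icc (i+1) (k+1), (2*j+1) := by ring
      _ = (2*i+1).doubleFactorial * ∏ j ∈ Finset.Icc (i+1) (k+1), (2*j+1) := by
            rw [← aux_odd_step]
      _ = (2*(i+1)-1).doubleFactorial * ∏ j ∈ Finset.Icc (i+1) (k+1), (2*j+1) := by
            rw [show 2*(i+1)-1 = 2*i+1 by omega]
      _ = (2*k+3).doubleFactorial := ih (i+1) (by omega)

private lemma auxC (k : ℕ) : ∀ d i, i + d = k + 2 →
    (∏ j ∈ Finset.Icc i (k+1), (k+2-j)) = (k+2-i).factorial := by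
  intro d
  induction d with
  | zero =>
    intro i hi
    have : i = k+2 := by omega
    subst this
    rw [Finset.Icc_eq_empty (by omega)]
    simp
  | succ d ih =>
    intro i hi
    have hik : i ≤ k+1 := by omega
    rw [Finset.Icc_eq_cons_Ioc hik, Finset.prod_cons, ← Finset.Icc_add_one_left_eq_Ioc]
    rw [ih (i+1) (by omega)]
    rw [show k+2-(i+1) = k+1-i by omega, show k+2-i = (k+1-i)+1 by omega,
      Nat.factorial_succ]

private lemma auxFact (i : ℕ) : ∏ j ∈ Finset.Icc 1 i, j = i.factorial := by
  rw [← Finset.Ico_add_one_right_eq_Icc]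
  exact Finset.prod_Ico_id_eq_factorial i

theorem stmt17 (m : ℕ) (hm : 3 ≤ m) :
    (∑ i ∈ Finset.Icc 1 (m - 2),
        (∏ j ∈ Finset.Icc 1 i,
            ((2 * (m : ℝ) - 1) ^ 2 - (-(2 * (m : ℝ)) + 1 + 4 * (j : ℝ)) ^ 2)⁻¹) *
          (∏ j ∈ Finset.Icc i (m - 2),
            ((2 * (m : ℝ) - 1) ^ 2 - (-(2 * (m : ℝ)) + 3 + 4 * (j : ℝ)) ^ 2)⁻¹)) +
      (∏ j ∈ Finset.Icc 0 (m - 2),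
        ((2 * (m : ℝ) - 1) ^ 2 - (-(2 * (m : ℝ)) + 3 + 4 * (j : ℝ)) ^ 2)⁻¹) +
      (∏ j ∈ Finset.Icc 1 (m - 1),
        ((2 * (m : ℝ) - 1) ^ 2 - (-(2 * (m : ℝ)) + 1 + 4 * (j : ℝ)) ^ 2)⁻¹) =
    (8 / 2 ^ (3 * m)) *
      ((1 / ((2 * m - 3).doubleFactorial : ℝ) ^ 2) *
          (∑ i ∈ Finset.Icc 1 (m - 2),
            ((2 * m - 2 * i - 3).doubleFactorial : ℝ) * ((2 * i - 1).doubleFactorial : ℝ) /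
              ((i.factorial : ℝ) * ((m - 1 - i).factorial : ℝ))) +
        2 / (((2 * m - 3).doubleFactorial : ℝ) * ((m - 1).factorial : ℝ))) := by
  obtain ⟨k, rfl⟩ : ∃ k, m = k + 3 := ⟨m - 3, by omega⟩
  clear hm
  simp only [show k+3-2 = k+1 by omega, show k+3-1 = k+2 by omega,
    show 2*(k+3)-3 = 2*k+3 by omega]
  have Dne : (((2*k+3).doubleFactorial : ℕ) : ℝ) ≠ 0 :=
    Nat.cast_ne_zero.mpr (Nat.doubleFactorial_pos _).ne'
  -- real product lemma, A-side
  have eA : ∀ i ≤ k+2,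
      (∏ j ∈ Finset.Icc 1 i,
        ((2 * ((k+3 : ℕ) : ℝ) - 1) ^ 2 - (-(2 * ((k+3 : ℕ) : ℝ)) + 1 + 4 * (j : ℝ)) ^ 2))
        * ((2*k+3-2*i).doubleFactorial : ℝ)
      = 8^i * (i.factorial : ℝ) * ((2*k+3).doubleFactorial : ℝ) := by
    intro i hi
    have step : (∏ j ∈ Finset.Icc 1 i,
        ((2 * ((k+3 : ℕ) : ℝ) - 1) ^ 2 - (-(2 * ((k+3 : ℕ) : ℝ)) + 1 + 4 * (j : ℝ)) ^ 2))
        = ((∏ j ∈ Finset.Icc 1 i, (8*j*(2*k+5-2*j)) : ℕ) : ℝ) := by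
      rw [Nat.cast_prod]
      refine Finset.prod_congr rfl fun j hj => ?_
      have hj2 : j ≤ i := (Finset.mem_Icc.mp hj).2
      push_cast [Nat.cast_sub (show 2*j ≤ 2*k+5 by omega)]
      ring
    rw [step]
    have natsplit : (∏ j ∈ Finset.Icc 1 i, (8*j*(2*k+5-2*j)))
        = 8^i * i.factorial * ∏ j ∈ Finset.Icc 1 i, (2*k+5-2*j) := by
      rw [Finset.prod_mul_distrib, Finset.prod_mul_distrib, Finset.prod_const,
        Nat.card_Icc, auxFact]
      simp
    rw [natsplit, ← Nat.cast_mul,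
      show (8 ^ i * i.factorial * ∏ j ∈ Finset.Icc 1 i, (2*k+5-2*j)) * (2*k+3-2*i).doubleFactorial
        = 8 ^ i * i.factorial * ((2*k+3-2*i).doubleFactorial * ∏ j ∈ Finset.Icc 1 i, (2*k+5-2*j)) from by ring,
      auxA2 k i hi]
    push_cast
    try ring
  -- real product lemma, B-side
  have eB : ∀ i ≤ k+2,
      (∏ j ∈ Finset.Icc i (k+1),
        ((2 * ((k+3 : ℕ) : ℝ) - 1) ^ 2 - (-(2 * ((k+3 : ℕ) : ℝ)) + 3 + 4 * (j : ℝ)) ^ 2))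
        * ((2*i-1).doubleFactorial : ℝ)
      = 8^(k+2-i) * ((k+2-i).factorial : ℝ) * ((2*k+3).doubleFactorial : ℝ) := by
    intro i hi
    have step : (∏ j ∈ Finset.Icc i (k+1),
        ((2 * ((k+3 : ℕ) : ℝ) - 1) ^ 2 - (-(2 * ((k+3 : ℕ) : ℝ)) + 3 + 4 * (j : ℝ)) ^ 2))
        = ((∏ j ∈ Finset.Icc i (k+1), (8*(k+2-j)*(2*j+1)) : ℕ) : ℝ) := by
      rw [Nat.cast_prod]
      refine Finset.prod_congr rfl fun j hj => ?_
      have hj2 : j ≤ k+1 := (Finset.mem_Icc.mp hj).2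
      push_cast [Nat.cast_sub (show j ≤ k+2 by omega)]
      ring
    rw [step]
    have natsplit : (∏ j ∈ Finset.Icc i (k+1), (8*(k+2-j)*(2*j+1)))
        = 8^(k+2-i) * (k+2-i).factorial * ∏ j ∈ Finset.Icc i (k+1), (2*j+1) := by
      rw [Finset.prod_mul_distrib, Finset.prod_mul_distrib, Finset.prod_const,
        Nat.card_Icc, auxC k (k+2-i) i (by omega)]
    rw [natsplit, ← Nat.cast_mul,
      show (8 ^ (k+2-i) * (k+2-i).factorial * ∏ j ∈ Finset.Icc i (k+1), (2*j+1)) * (2*i-1).doubleFactorial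
        = 8 ^ (k+2-i) * (k+2-i).factorial * ((2*i-1).doubleFactorial * ∏ j ∈ Finset.Icc i (k+1), (2*j+1)) from by ring,
      auxB k (k+2-i) i (by omega)]
    push_cast
    try ring
  -- power bookkeeping
  have h8 : ∀ i ≤ k+2, (2:ℝ)^(3*(k+3)) = 8 * (8^i * 8^(k+2-i)) := by
    intro i hi
    rw [← pow_add, show i + (k+2-i) = k+2 by omega]
    rw [show (8:ℝ) = 2^3 by norm_num, ← pow_succ', ← pow_mul]
  rw [mul_add, ← mul_assoc, Finset.mul_sum, add_assoc]
  congr 1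
  · refine Finset.sum_congr rfl fun i hi => ?_
    obtain ⟨hi1, hi2⟩ := Finset.mem_Icc.mp hi
    rw [show 2*(k+3)-2*i-3 = 2*k+3-2*i by omega]
    have hA := eA i (by omega)
    have hB := eB i (by omega)
    have dne : ((2*k+3-2*i).doubleFactorial : ℝ) ≠ 0 :=
      Nat.cast_ne_zero.mpr (Nat.doubleFactorial_pos _).ne'
    have one : ((2*i-1).doubleFactorial : ℝ) ≠ 0 :=
      Nat.cast_ne_zero.mpr (Nat.doubleFactorial_pos _).ne'
    have fne : (i.factorial : ℝ) ≠ 0 := Nat.cast_ne_zero.mpr i.factorial_ne_zero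
    have fne2 : ((k+2-i).factorial : ℝ) ≠ 0 := Nat.cast_ne_zero.mpr (Nat.factorial_ne_zero _)
    have p8 : (8:ℝ)^i ≠ 0 := by positivity
    have p8' : (8:ℝ)^(k+2-i) ≠ 0 := by positivity
    have hprodA : (∏ j ∈ Finset.Icc 1 i,
        ((2 * ((k+3 : ℕ) : ℝ) - 1) ^ 2 - (-(2 * ((k+3 : ℕ) : ℝ)) + 1 + 4 * (j : ℝ)) ^ 2))
        = 8^i * (i.factorial : ℝ) * ((2*k+3).doubleFactorial : ℝ) / ((2*k+3-2*i).doubleFactorial : ℝ) :=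
      eq_div_of_mul_eq dne hA
    have hprodB : (∏ j ∈ Finset.Icc i (k+1),
        ((2 * ((k+3 : ℕ) : ℝ) - 1) ^ 2 - (-(2 * ((k+3 : ℕ) : ℝ)) + 3 + 4 * (j : ℝ)) ^ 2))
        = 8^(k+2-i) * ((k+2-i).factorial : ℝ) * ((2*k+3).doubleFactorial : ℝ) / ((2*i-1).doubleFactorial : ℝ) :=
      eq_div_of_mul_eq one hB
    rw [Finset.prod_inv_distrib, Finset.prod_inv_distrib, hprodA, hprodB, h8 i (by omega)]
    field_simp
  · have hA := eA (k+2) (le_refl _)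
    have hB := eB 0 (by omega)
    rw [show 2*k+3-2*(k+2) = 0 by omega] at hA
    rw [show (2*0-1 : ℕ) = 0 by omega, show (k+2-0 : ℕ) = k+2 by omega] at hB
    rw [show Nat.doubleFactorial 0 = 1 from rfl] at hA hB
    simp only [Nat.cast_one, mul_one] at hA hB
    have fne2 : ((k+2).factorial : ℝ) ≠ 0 := Nat.cast_ne_zero.mpr (Nat.factorial_ne_zero _)
    have p8 : (8:ℝ)^(k+2) ≠ 0 := by positivity
    rw [Finset.prod_inv_distrib, Finset.prod_inv_distrib, hA, hB, h8 0 (by omega)]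
    field_simp
    simp only [Nat.sub_zero]
    ring
end
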